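/- arXiv:math/9912188 — 2 statements merged into one kernel-verified Lean document; each statement's English description precedes it below -/
import Mathlib

section
/- For integers n ≥ m ≥ 2, f(S_m, K̄_n) ≤ n + min over positive integers k of max{ k + ⌈(n−1)/k⌉, 2m − 3 − k }. -/
open SimpleGraph Finset

/-- Every vertex of `G` lies in an induced copy of `H` (a `SimpleGraph.Embedding`
`H ↪g G` is exactly an induced-subgraph copy of `H` in `G`). -/
def CoveredByCopies {α β : Type*} (G : SimpleGraph α) (H : SimpleGraph β) : Prop :=
  ∀ v : α, ∃ φ : H ↪g G, v ∈ Set.range ⇑φ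

/-- `G` is `(H₁, H₂)`-full: for each `i`, the induced copies of `Hᵢ` cover `V(G)`. -/
def IsFullPair {α β γ : Type*} (G : SimpleGraph α) (H₁ : SimpleGraph β)
    (H₂ : SimpleGraph γ) : Prop :=
  CoveredByCopies G H₁ ∧ CoveredByCopies G H₂

/-- `f(H₁, H₂)`: the minimum order of an `(H₁, H₂)`-full graph. -/
noncomputable def fullNum2 {β γ : Type*} (H₁ : SimpleGraph β) (H₂ : SimpleGraph γ) : ℕ :=
  sInf {N : ℕ | ∃ G : SimpleGraph (Fin N), IsFullPair G H₁ H₂}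


lemma exists_bot_embedding {α : Type*} {G : SimpleGraph α} {n : ℕ} (hn : 1 ≤ n)
    (S : Finset α) (hind : ∀ x ∈ S, ∀ y ∈ S, ¬ G.Adj x y) (hcard : n ≤ S.card)
    {v : α} (hv : v ∈ S) :
    ∃ φ : (⊥ : SimpleGraph (Fin n)) ↪g G, v ∈ Set.range ⇑φ := by
  obtain ⟨S', hsub1, hsub2, hcard'⟩ :=
    Finset.exists_subsuperset_card_eq (s := {v}) (t := S) (by simpa using hv)
      (by simpa using hn) hcard
  have e : (S' : Finset α) ≃ Fin n := Finset.equivFinOfCardEq hcard'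
  refine ⟨⟨⟨fun i => (e.symm i : α), ?_⟩, ?_⟩, ?_⟩
  · intro i j h
    have h2 : e.symm i = e.symm j := Subtype.ext h
    simpa using congrArg e h2
  · intro i j
    exact iff_of_false (hind _ (hsub2 (e.symm i).2) _ (hsub2 (e.symm j).2)) (by simp)
  · exact ⟨e ⟨v, hsub1 (by simp)⟩, by show ((e.symm (e ⟨v, hsub1 (by simp)⟩) : S') : α) = v; simp⟩

lemma exists_star_embedding {α : Type*} {G : SimpleGraph α} {m : ℕ} (hm : 2 ≤ m)
    (c : α) (L : Finset α) (hadj : ∀ x ∈ L, G.Adj c x)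
    (hind : ∀ x ∈ L, ∀ y ∈ L, x ≠ y → ¬ G.Adj x y) (hcard : m - 1 ≤ L.card)
    {v : α} (hv : v = c ∨ v ∈ L) :
    ∃ φ : completeBipartiteGraph (Fin 1) (Fin (m - 1)) ↪g G, v ∈ Set.range ⇑φ := by
  have hm1 : 1 ≤ m - 1 := by omega
  obtain ⟨L', hsubL', hcard', hmem⟩ : ∃ L', L' ⊆ L ∧ L'.card = m - 1 ∧ (v ∈ L → v ∈ L') := by
    rcases em (v ∈ L) with hvL | hvL
    · obtain ⟨L', h1, h2, h3⟩ := Finset.exists_subsuperset_card_eq (s := {v}) (t := L)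
        (by simpa using hvL) (by simpa using hm1) hcard
      exact ⟨L', h2, h3, fun _ => h1 (by simp)⟩
    · obtain ⟨L', h1, h2⟩ := Finset.exists_subset_card_eq hcard
      exact ⟨L', h1, h2, fun h => absurd h hvL⟩
  have e : (L' : Finset α) ≃ Fin (m - 1) := Finset.equivFinOfCardEq hcard'
  have hL' : ∀ x ∈ L', G.Adj c x := fun x hx => hadj x (hsubL' hx)
  refine ⟨⟨⟨Sum.elim (fun _ => c) (fun i => (e.symm i : α)), ?_⟩, ?_⟩, ?_⟩
  · intro x y h
    match x, y with
    | Sum.inl i, Sum.inl j =>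
      have : i = j := Subsingleton.elim i j
      exact congrArg Sum.inl this
    | Sum.inl i, Sum.inr j =>
      exact (G.ne_of_adj (hL' _ (e.symm j).2) h).elim
    | Sum.inr i, Sum.inl j =>
      exact (G.ne_of_adj (hL' _ (e.symm i).2) h.symm).elim
    | Sum.inr i, Sum.inr j =>
      have h2 : e.symm i = e.symm j := Subtype.ext h
      simpa using congrArg e h2
  · intro x y
    match x, y with
    | Sum.inl i, Sum.inl j => simp [G.irrefl]; exact G.irrefl
    | Sum.inl i, Sum.inr j => simp [hL' _ (e.symm j).2]; exact hL' _ (e.symm j).2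
    | Sum.inr i, Sum.inl j => simp [(hL' _ (e.symm i).2).symm]; exact (hL' _ (e.symm i).2).symm
    | Sum.inr i, Sum.inr j =>
      refine iff_of_false ?_ (by simp)
      rcases em (i = j) with rfl | hij
      · exact G.irrefl
      · refine hind _ (hsubL' (e.symm i).2) _ (hsubL' (e.symm j).2) ?_
        intro hc
        exact hij (by simpa using congrArg e (Subtype.ext hc))
  · rcases hv with rfl | hvL
    · exact ⟨Sum.inl 0, rfl⟩
    · exact ⟨Sum.inr (e ⟨v, hmem hvL⟩), by show ((e.symm (e ⟨v, hmem hvL⟩) : L') : α) = v; simp⟩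

namespace FullCon

/-- window size -/
def sW (n τ : ℕ) : ℕ := min (τ+1) (n-1)
/-- start of the `j`-th B-window -/
def cB (n τ j : ℕ) : ℕ := min (j * sW n τ) (n-1 - sW n τ)
/-- end of the `j`-th A-window -/
def hiA (n τ j : ℕ) : ℕ := min ((j+1) * sW n τ) (n-1)
/-- length of the `j`-th A-window -/
def wlen (n τ j : ℕ) : ℕ := hiA n τ j - j * sW n τ
/-- number of T-vertices attached to A-worker `j` -/
def ej (n m b τ j : ℕ) : ℕ := min τ (m-1-b - wlen n τ j)

/-- adjacency between X-vertex `i` and Y-vertex `j` -/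
def PP (n a b τ : ℕ) (i j : ℕ) : Prop :=
  (j < b ∧ cB n τ j ≤ i ∧ i < cB n τ j + sW n τ) ∨
  (b ≤ j ∧ j+1 < a+b ∧ j * sW n τ ≤ i ∧ i < hiA n τ j) ∨
  (j+1 = a+b ∧ i+1 = n)

/-- adjacency between Y-vertices `j`, `j'` -/
def QQ (n m a b τ : ℕ) (j j' : ℕ) : Prop :=
  (j < b ∧ b ≤ j' ∧ j' < a+b) ∨
  (j+1 = a+b ∧ a+b ≤ j') ∨
  (b ≤ j ∧ j+1 < a+b ∧ a+b ≤ j' ∧ j' < a+b + ej n m b τ j)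

def rel (n m a b τ : ℕ) : (Fin n ⊕ Fin (a+b+τ)) → (Fin n ⊕ Fin (a+b+τ)) → Prop
  | Sum.inl i, Sum.inr j => PP n a b τ i.1 j.1
  | Sum.inr j, Sum.inr j' => QQ n m a b τ j.1 j'.1
  | _, _ => False

def GG (n m a b τ : ℕ) : SimpleGraph (Fin n ⊕ Fin (a+b+τ)) :=
  SimpleGraph.fromRel (rel n m a b τ)

lemma adj_ll {n m a b τ : ℕ} (i i' : Fin n) :
    ¬ (GG n m a b τ).Adj (.inl i) (.inl i') := by
  simp [GG, SimpleGraph.fromRel_adj, rel]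

lemma adj_lr {n m a b τ : ℕ} (i : Fin n) (j : Fin (a+b+τ)) :
    (GG n m a b τ).Adj (.inl i) (.inr j) ↔ PP n a b τ i.1 j.1 := by
  simp [GG, SimpleGraph.fromRel_adj, rel]

lemma adj_rl {n m a b τ : ℕ} (i : Fin n) (j : Fin (a+b+τ)) :
    (GG n m a b τ).Adj (.inr j) (.inl i) ↔ PP n a b τ i.1 j.1 := by
  rw [SimpleGraph.adj_comm]; exact adj_lr i j

lemma adj_rr {n m a b τ : ℕ} (j j' : Fin (a+b+τ)) :
    (GG n m a b τ).Adj (.inr j) (.inr j') ↔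
      j.1 ≠ j'.1 ∧ (QQ n m a b τ j.1 j'.1 ∨ QQ n m a b τ j'.1 j.1) := by
  rw [GG, SimpleGraph.fromRel_adj]
  show (Sum.inr j ≠ Sum.inr j') ∧ _ ↔ _
  rw [ne_eq, Sum.inr.injEq, ← ne_eq, Fin.ne_iff_vne]
  rfl


lemma no_adj_cases {S : Finset (Fin n ⊕ Fin (a+b+τ))}
    (hlr : ∀ i : Fin n, .inl i ∈ S → ∀ j : Fin (a+b+τ), .inr j ∈ S → ¬ PP n a b τ i.1 j.1)
    (hrr : ∀ j : Fin (a+b+τ), .inr j ∈ S → ∀ j' : Fin (a+b+τ), .inr j' ∈ S →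
      ¬ QQ n m a b τ j.1 j'.1) :
    ∀ x ∈ S, ∀ y ∈ S, ¬ (GG n m a b τ).Adj x y := by
  rintro (i | j) hx (i' | j') hy hadj
  · exact adj_ll i i' hadj
  · exact hlr i hx j' hy ((adj_lr i j').1 hadj)
  · exact hlr i' hy j hx ((adj_rl i' j).1 hadj)
  · rcases (adj_rr j j').1 hadj with ⟨hne, hQ | hQ⟩
    · exact hrr j hx j' hy hQ
    · exact hrr j' hy j hx hQ

lemma indepB (hn : 2 ≤ n) (ha : 1 ≤ a)
    (j : Fin (a+b+τ)) (hj : j.1 < b) :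
    ∃ φ : (⊥ : SimpleGraph (Fin n)) ↪g (GG n m a b τ), Sum.inr j ∈ Set.range ⇑φ := by
  have hs : 1 ≤ sW n τ ∧ sW n τ ≤ n-1 ∧ sW n τ ≤ τ+1 := by unfold sW; omega
  have hcb : cB n τ j.1 + sW n τ ≤ n-1 := by unfold cB; omega
  refine exists_bot_embedding (by omega)
    (((Ico 0 (cB n τ j.1) ∪ Ico (cB n τ j.1 + sW n τ) n).attachFin (by
        intro x hx; simp [Finset.mem_union, Finset.mem_Ico] at hx; omega)).disjSum
      (((insert j.1 (Ico (a+b) (a+b+τ)))).attachFin (by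
        intro x hx; simp [Finset.mem_Ico] at hx; omega)))
    ?_ ?_ ?_
  · apply no_adj_cases
    · intro i hi v hv hP
      rw [inl_mem_disjSum, Finset.mem_attachFin] at hi
      rw [inr_mem_disjSum, Finset.mem_attachFin] at hv
      simp only [Finset.mem_union, Finset.mem_Ico, Finset.mem_insert] at hi hv
      rcases hv with hv | hv
      · rw [hv] at hP
        rcases hP with ⟨_, h1, h2⟩ | ⟨h1, _⟩ | ⟨h1, _⟩ <;> omega
      · rcases hP with ⟨h1, _⟩ | ⟨_, h1, _⟩ | ⟨h1, _⟩ <;> omega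
    · intro v hv v' hv' hQ
      rw [inr_mem_disjSum, Finset.mem_attachFin] at hv hv'
      simp only [Finset.mem_Ico, Finset.mem_insert] at hv hv'
      rcases hQ with ⟨h1, h2, h3⟩ | ⟨h1, h2⟩ | ⟨h1, h2, h3, h4⟩ <;> omega
  · rw [card_disjSum, Finset.card_attachFin, Finset.card_attachFin,
      Finset.card_union_of_disjoint (by
        simp [Finset.disjoint_left, Finset.mem_Ico]; omega),
      Finset.card_insert_of_notMem (by simp [Finset.mem_Ico]; omega)]
    simp only [Nat.card_Ico]
    omega
  · rw [inr_mem_disjSum, Finset.mem_attachFin]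
    simp
lemma indepA (hn : 2 ≤ n) (hbτ : m-2 ≤ b+τ)
    (j : Fin (a+b+τ)) (hj : b ≤ j.1) (hj2 : j.1+1 < a+b) :
    ∃ φ : (⊥ : SimpleGraph (Fin n)) ↪g (GG n m a b τ), Sum.inr j ∈ Set.range ⇑φ := by
  have hs : 1 ≤ sW n τ ∧ sW n τ ≤ n-1 ∧ sW n τ ≤ τ+1 := by unfold sW; omega
  have hmul : (j.1+1) * sW n τ = j.1 * sW n τ + sW n τ := by ring
  have hhi : hiA n τ j.1 ≤ n-1 ∧ min (j.1 * sW n τ) (n-1) ≤ hiA n τ j.1 := by unfold hiA; omega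
  have hwl : wlen n τ j.1 = hiA n τ j.1 - j.1 * sW n τ := rfl
  have hcap : wlen n τ j.1 + ej n m b τ j.1 ≤ τ + 1 := by
    have h1 : wlen n τ j.1 ≤ sW n τ := by unfold wlen hiA; omega
    unfold ej; omega
  have hej : ej n m b τ j.1 ≤ τ := by unfold ej; omega
  refine exists_bot_embedding (by omega)
    (((Ico 0 (min (j.1 * sW n τ) (n-1)) ∪ Ico (hiA n τ j.1) n).attachFin (by
        intro x hx; simp [Finset.mem_union, Finset.mem_Ico] at hx; omega)).disjSum
      (((insert j.1 (Ico (a+b+ej n m b τ j.1) (a+b+τ)))).attachFin (by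
        intro x hx; simp [Finset.mem_Ico] at hx; omega)))
    ?_ ?_ ?_
  · apply no_adj_cases
    · intro i hi v hv hP
      rw [inl_mem_disjSum, Finset.mem_attachFin] at hi
      rw [inr_mem_disjSum, Finset.mem_attachFin] at hv
      simp only [Finset.mem_union, Finset.mem_Ico, Finset.mem_insert] at hi hv
      rcases hv with hv | hv
      · rw [hv] at hP
        rcases hP with ⟨h1, _⟩ | ⟨_, _, h1, h2⟩ | ⟨h1, _⟩ <;> omega
      · rcases hP with ⟨h1, _⟩ | ⟨_, h1, _⟩ | ⟨h1, _⟩ <;> omega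
    · intro v hv v' hv' hQ
      rw [inr_mem_disjSum, Finset.mem_attachFin] at hv hv'
      simp only [Finset.mem_Ico, Finset.mem_insert] at hv hv'
      rcases hv with hv | hv <;> rcases hv' with hv' | hv' <;>
        [skip; rw [hv] at hQ; rw [hv'] at hQ; skip] <;>
        rcases hQ with ⟨h1, h2, h3⟩ | ⟨h1, h2⟩ | ⟨h1, h2, h3, h4⟩ <;> omega
  · rw [card_disjSum, Finset.card_attachFin, Finset.card_attachFin,
      Finset.card_union_of_disjoint (by
        simp [Finset.disjoint_left, Finset.mem_Ico]; unfold hiA; omega),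
      Finset.card_insert_of_notMem (by simp [Finset.mem_Ico]; omega)]
    simp only [Nat.card_Ico]
    unfold wlen at hcap
    omega
  · rw [inr_mem_disjSum, Finset.mem_attachFin]
    simp

lemma indepTop (hn : 2 ≤ n) (ha : 1 ≤ a)
    (j : Fin (a+b+τ)) (hj : a+b ≤ j.1+1) :
    ∃ φ : (⊥ : SimpleGraph (Fin n)) ↪g (GG n m a b τ), Sum.inr j ∈ Set.range ⇑φ := by
  have hs : 1 ≤ sW n τ ∧ sW n τ ≤ n-1 ∧ sW n τ ≤ τ+1 := by unfold sW; omega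
  refine exists_bot_embedding (by omega)
    (((Ico 0 (n-1)).attachFin (by intro x hx; simp [Finset.mem_Ico] at hx; omega)).disjSum
      ((({j.1} : Finset ℕ)).attachFin (by intro x hx; simp at hx; omega)))
    ?_ ?_ ?_
  · apply no_adj_cases
    · intro i hi v hv hP
      rw [inl_mem_disjSum, Finset.mem_attachFin] at hi
      rw [inr_mem_disjSum, Finset.mem_attachFin] at hv
      simp only [Finset.mem_Ico, Finset.mem_singleton] at hi hv
      have hcb : cB n τ v.1 + sW n τ ≤ n-1 := by unfold cB; omega
      rcases hP with ⟨h1, h2, h3⟩ | ⟨h1, h2, _⟩ | ⟨h1, h2⟩ <;> omega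
    · intro v hv v' hv' hQ
      rw [inr_mem_disjSum, Finset.mem_attachFin] at hv hv'
      simp only [Finset.mem_singleton] at hv hv'
      rcases hQ with ⟨h1, h2, h3⟩ | ⟨h1, h2⟩ | ⟨h1, h2, h3, h4⟩ <;> omega
  · rw [card_disjSum, Finset.card_attachFin, Finset.card_attachFin]
    simp only [Nat.card_Ico, Finset.card_singleton]
    omega
  · rw [inr_mem_disjSum, Finset.mem_attachFin]; simp

lemma indepX (hn : 2 ≤ n) (i : Fin n) :
    ∃ φ : (⊥ : SimpleGraph (Fin n)) ↪g (GG n m a b τ), Sum.inl i ∈ Set.range ⇑φ := by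
  refine exists_bot_embedding (by omega)
    ((univ : Finset (Fin n)).disjSum (∅ : Finset (Fin (a+b+τ)))) ?_ ?_ ?_
  · apply no_adj_cases
    · intro i hi v hv hP
      rw [inr_mem_disjSum] at hv; simp at hv
    · intro v hv; rw [inr_mem_disjSum] at hv; simp at hv
  · rw [card_disjSum]; simp
  · rw [inl_mem_disjSum]; simp
lemma starB (hm : 2 ≤ m) (hn : 2 ≤ n) (hmn : m ≤ n) (haτ : m-2 ≤ a+τ)
    (w : Fin (a+b+τ)) (hw : w.1 < b) (v : Fin n ⊕ Fin (a+b+τ))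
    (hv : v = Sum.inr w ∨
      (∃ i : Fin n, v = Sum.inl i ∧ cB n τ w.1 ≤ i.1 ∧ i.1 < cB n τ w.1 + sW n τ) ∨
      (∃ u : Fin (a+b+τ), v = Sum.inr u ∧ b ≤ u.1 ∧ u.1 < a+b)) :
    ∃ φ : completeBipartiteGraph (Fin 1) (Fin (m-1)) ↪g (GG n m a b τ),
      v ∈ Set.range ⇑φ := by
  have hs : 1 ≤ sW n τ ∧ sW n τ ≤ n-1 ∧ sW n τ ≤ τ+1 := by unfold sW; omega
  have hcb : cB n τ w.1 + sW n τ ≤ n-1 := by unfold cB; omega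
  have hpool : m-1 ≤ sW n τ + a := by unfold sW; omega
  have hbnd : ∀ x ∈ Ico (cB n τ w.1) (cB n τ w.1 + sW n τ), x < n := by
    intro x hx; simp [Finset.mem_Ico] at hx; omega
  have hbnd2 : ∀ x ∈ Ico b (a+b), x < a+b+τ := by
    intro x hx; simp [Finset.mem_Ico] at hx; omega
  set L : Finset (Fin n ⊕ Fin (a+b+τ)) :=
    ((Ico (cB n τ w.1) (cB n τ w.1 + sW n τ)).attachFin hbnd).disjSum
      ((Ico b (a+b)).attachFin hbnd2) with hL
  refine exists_star_embedding hm (Sum.inr w) L ?_ ?_ ?_ ?_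
  · rintro (i | u) hx
    · rw [inl_mem_disjSum, Finset.mem_attachFin, Finset.mem_Ico] at hx
      rw [adj_rl]
      exact Or.inl ⟨hw, hx.1, hx.2⟩
    · rw [inr_mem_disjSum, Finset.mem_attachFin, Finset.mem_Ico] at hx
      rw [adj_rr]
      exact ⟨by omega, Or.inl (Or.inl ⟨hw, hx.1, hx.2⟩)⟩
  · have hno : ∀ x ∈ L, ∀ y ∈ L, ¬ (GG n m a b τ).Adj x y := by
      apply no_adj_cases
      · intro i hi u hu hP
        rw [hL, inl_mem_disjSum, Finset.mem_attachFin, Finset.mem_Ico] at hi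
        rw [hL, inr_mem_disjSum, Finset.mem_attachFin, Finset.mem_Ico] at hu
        have e1 : cB n τ w.1 ≤ w.1 * sW n τ := by unfold cB; omega
        have e2 : (w.1+1) * sW n τ = w.1 * sW n τ + sW n τ := by ring
        have e3 : (w.1+1) * sW n τ ≤ b * sW n τ := Nat.mul_le_mul_right _ (by omega)
        have e4 : b * sW n τ ≤ u.1 * sW n τ := Nat.mul_le_mul_right _ (by omega)
        rcases hP with ⟨h1, _⟩ | ⟨h1, h2, h3, h4⟩ | ⟨h1, h2⟩ <;> omega
      · intro u hu u' hu' hQ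
        rw [hL, inr_mem_disjSum, Finset.mem_attachFin, Finset.mem_Ico] at hu hu'
        rcases hQ with ⟨h1, h2, h3⟩ | ⟨h1, h2⟩ | ⟨h1, h2, h3, h4⟩ <;> omega
    exact fun x hx y hy _ => hno x hx y hy
  · rw [hL, card_disjSum, Finset.card_attachFin, Finset.card_attachFin,
      Nat.card_Ico, Nat.card_Ico]
    omega
  · rcases hv with rfl | ⟨i, rfl, h1, h2⟩ | ⟨u, rfl, h1, h2⟩
    · exact Or.inl rfl
    · refine Or.inr ?_
      rw [hL, inl_mem_disjSum, Finset.mem_attachFin, Finset.mem_Ico]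
      exact ⟨h1, h2⟩
    · refine Or.inr ?_
      rw [hL, inr_mem_disjSum, Finset.mem_attachFin, Finset.mem_Ico]
      exact ⟨h1, h2⟩

lemma starA (hm : 2 ≤ m) (hn : 2 ≤ n) (ha : 1 ≤ a) (hbτ : m-2 ≤ b+τ)
    (w : Fin (a+b+τ)) (hw1 : b ≤ w.1) (hw2 : w.1+1 < a+b) (hwin : 1 ≤ wlen n τ w.1)
    (v : Fin n ⊕ Fin (a+b+τ))
    (hv : v = Sum.inr w ∨
      (∃ i : Fin n, v = Sum.inl i ∧ w.1 * sW n τ ≤ i.1 ∧ i.1 < hiA n τ w.1)) :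
    ∃ φ : completeBipartiteGraph (Fin 1) (Fin (m-1)) ↪g (GG n m a b τ),
      v ∈ Set.range ⇑φ := by
  have hs : 1 ≤ sW n τ ∧ sW n τ ≤ n-1 ∧ sW n τ ≤ τ+1 := by unfold sW; omega
  have hhi : hiA n τ w.1 ≤ n-1 := by unfold hiA; omega
  have hejτ : ej n m b τ w.1 ≤ τ := by unfold ej; omega
  have hpool : m-1 ≤ wlen n τ w.1 + (b + ej n m b τ w.1) := by unfold ej; omega
  have hwl : wlen n τ w.1 = hiA n τ w.1 - w.1 * sW n τ := rfl
  have hbnd : ∀ x ∈ Ico (w.1 * sW n τ) (hiA n τ w.1), x < n := by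
    intro x hx; simp [Finset.mem_Ico] at hx; omega
  have hbnd2 : ∀ x ∈ Ico 0 b ∪ Ico (a+b) (a+b+ej n m b τ w.1), x < a+b+τ := by
    intro x hx; simp [Finset.mem_union, Finset.mem_Ico] at hx; omega
  set L : Finset (Fin n ⊕ Fin (a+b+τ)) :=
    ((Ico (w.1 * sW n τ) (hiA n τ w.1)).attachFin hbnd).disjSum
      ((Ico 0 b ∪ Ico (a+b) (a+b+ej n m b τ w.1)).attachFin hbnd2) with hL
  refine exists_star_embedding hm (Sum.inr w) L ?_ ?_ ?_ ?_
  · rintro (i | u) hx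
    · rw [inl_mem_disjSum, Finset.mem_attachFin, Finset.mem_Ico] at hx
      rw [adj_rl]
      exact Or.inr (Or.inl ⟨hw1, hw2, hx.1, hx.2⟩)
    · rw [inr_mem_disjSum, Finset.mem_attachFin] at hx
      simp only [Finset.mem_union, Finset.mem_Ico] at hx
      rw [adj_rr]
      rcases hx with hx | hx
      · exact ⟨by omega, Or.inr (Or.inl ⟨hx.2, hw1, by omega⟩)⟩
      · exact ⟨by omega, Or.inl (Or.inr (Or.inr ⟨hw1, hw2, hx.1, hx.2⟩))⟩
  · have hno : ∀ x ∈ L, ∀ y ∈ L, ¬ (GG n m a b τ).Adj x y := by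
      apply no_adj_cases
      · intro i hi u hu hP
        rw [hL, inl_mem_disjSum, Finset.mem_attachFin, Finset.mem_Ico] at hi
        rw [hL, inr_mem_disjSum, Finset.mem_attachFin] at hu
        simp only [Finset.mem_union, Finset.mem_Ico] at hu
        have e1 : cB n τ u.1 ≤ u.1 * sW n τ := by unfold cB; omega
        have e2 : (u.1+1) * sW n τ = u.1 * sW n τ + sW n τ := by ring
        have e3 : u.1 < b → (u.1+1) * sW n τ ≤ b * sW n τ :=
          fun h => Nat.mul_le_mul_right _ (by omega)
        have e4 : b * sW n τ ≤ w.1 * sW n τ := Nat.mul_le_mul_right _ (by omega)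
        rcases hu with hu | hu
        · rcases hP with ⟨h1, h2, h3⟩ | ⟨h1, _⟩ | ⟨h1, h2⟩ <;> omega
        · rcases hP with ⟨h1, _⟩ | ⟨_, h1, _⟩ | ⟨h1, _⟩ <;> omega
      · intro u hu u' hu' hQ
        rw [hL, inr_mem_disjSum, Finset.mem_attachFin] at hu hu'
        simp only [Finset.mem_union, Finset.mem_Ico] at hu hu'
        rcases hQ with ⟨h1, h2, h3⟩ | ⟨h1, h2⟩ | ⟨h1, h2, h3, h4⟩ <;> omega
    exact fun x hx y hy _ => hno x hx y hy
  · rw [hL, card_disjSum, Finset.card_attachFin, Finset.card_attachFin,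
      Finset.card_union_of_disjoint (by
        simp [Finset.disjoint_left, Finset.mem_Ico]; omega),
      Nat.card_Ico, Nat.card_Ico, Nat.card_Ico]
    unfold wlen at hpool
    omega
  · rcases hv with rfl | ⟨i, rfl, h1, h2⟩
    · exact Or.inl rfl
    · refine Or.inr ?_
      rw [hL, inl_mem_disjSum, Finset.mem_attachFin, Finset.mem_Ico]
      exact ⟨h1, h2⟩

lemma starApex (hm : 2 ≤ m) (hn : 2 ≤ n) (ha : 1 ≤ a) (hb : 1 ≤ b) (hbτ : m-2 ≤ b+τ)
    (v : Fin n ⊕ Fin (a+b+τ))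
    (hv : (∃ u : Fin (a+b+τ), v = Sum.inr u ∧ a+b ≤ u.1+1) ∨
      (∃ i : Fin n, v = Sum.inl i ∧ i.1+1 = n) ∨
      (∃ u : Fin (a+b+τ), v = Sum.inr u ∧ u.1 < b)) :
    ∃ φ : completeBipartiteGraph (Fin 1) (Fin (m-1)) ↪g (GG n m a b τ),
      v ∈ Set.range ⇑φ := by
  have hs : 1 ≤ sW n τ ∧ sW n τ ≤ n-1 ∧ sW n τ ≤ τ+1 := by unfold sW; omega
  have hbnd : ∀ x ∈ Ico (n-1) n, x < n := by intro x hx; simp [Finset.mem_Ico] at hx; omega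
  have hbnd2 : ∀ x ∈ Ico 0 b ∪ Ico (a+b) (a+b+τ), x < a+b+τ := by
    intro x hx; simp [Finset.mem_union, Finset.mem_Ico] at hx; omega
  set c : Fin n ⊕ Fin (a+b+τ) := Sum.inr ⟨a+b-1, by omega⟩ with hc
  set L : Finset (Fin n ⊕ Fin (a+b+τ)) :=
    ((Ico (n-1) n).attachFin hbnd).disjSum
      ((Ico 0 b ∪ Ico (a+b) (a+b+τ)).attachFin hbnd2) with hL
  refine exists_star_embedding hm c L ?_ ?_ ?_ ?_
  · rintro (i | u) hx
    · rw [hL, inl_mem_disjSum, Finset.mem_attachFin, Finset.mem_Ico] at hx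
      rw [hc, adj_rl]
      refine Or.inr (Or.inr ⟨?_, by omega⟩)
      show (a+b-1) + 1 = a+b
      omega
    · rw [hL, inr_mem_disjSum, Finset.mem_attachFin] at hx
      simp only [Finset.mem_union, Finset.mem_Ico] at hx
      rw [hc, adj_rr]
      rcases hx with hx | hx
      · refine ⟨?_, Or.inr (Or.inl ⟨hx.2, ?_, ?_⟩)⟩ <;> show _ <;>
          simp only [] <;> omega
      · refine ⟨?_, Or.inl (Or.inr (Or.inl ⟨?_, hx.1⟩))⟩ <;> simp only [] <;> omega
  · have hno : ∀ x ∈ L, ∀ y ∈ L, ¬ (GG n m a b τ).Adj x y := by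
      apply no_adj_cases
      · intro i hi u hu hP
        rw [hL, inl_mem_disjSum, Finset.mem_attachFin, Finset.mem_Ico] at hi
        rw [hL, inr_mem_disjSum, Finset.mem_attachFin] at hu
        simp only [Finset.mem_union, Finset.mem_Ico] at hu
        have e1 : cB n τ u.1 + sW n τ ≤ n-1 := by unfold cB; omega
        have e2 : hiA n τ u.1 ≤ n-1 := by unfold hiA; omega
        rcases hu with hu | hu <;>
          [rcases hP with ⟨h1, h2, h3⟩ | ⟨h1, _, _, h2⟩ | ⟨h1, h2⟩;
           rcases hP with ⟨h1, _⟩ | ⟨_, h1, _⟩ | ⟨h1, h2⟩] <;> omega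
      · intro u hu u' hu' hQ
        rw [hL, inr_mem_disjSum, Finset.mem_attachFin] at hu hu'
        simp only [Finset.mem_union, Finset.mem_Ico] at hu hu'
        rcases hQ with ⟨h1, h2, h3⟩ | ⟨h1, h2⟩ | ⟨h1, h2, h3, h4⟩ <;> omega
    exact fun x hx y hy _ => hno x hx y hy
  · rw [hL, card_disjSum, Finset.card_attachFin, Finset.card_attachFin,
      Finset.card_union_of_disjoint (by
        simp [Finset.disjoint_left, Finset.mem_Ico]; omega),
      Nat.card_Ico, Nat.card_Ico, Nat.card_Ico]
    omega
  · rcases hv with ⟨u, rfl, h1⟩ | ⟨i, rfl, h1⟩ | ⟨u, rfl, h1⟩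
    · rcases Nat.lt_or_ge u.1 (a+b) with h2 | h2
      · refine Or.inl ?_
        rw [hc]
        congr 1
        apply Fin.ext
        show u.1 = a+b-1
        omega
      · refine Or.inr ?_
        have hu2 := u.isLt
        rw [hL, inr_mem_disjSum, Finset.mem_attachFin]
        simp only [Finset.mem_union, Finset.mem_Ico]
        omega
    · refine Or.inr ?_
      rw [hL, inl_mem_disjSum, Finset.mem_attachFin, Finset.mem_Ico]
      omega
    · refine Or.inr ?_
      rw [hL, inr_mem_disjSum, Finset.mem_attachFin]
      simp only [Finset.mem_union, Finset.mem_Ico]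
      omega
theorem isFullPair_GG (hm : 2 ≤ m) (hmn : m ≤ n) (ha : 1 ≤ a) (hb : 1 ≤ b)
    (haτ : m-2 ≤ a+τ) (hbτ : m-2 ≤ b+τ) (hcov : n-1 ≤ (a+b-1) * (τ+1)) :
    IsFullPair (GG n m a b τ) (completeBipartiteGraph (Fin 1) (Fin (m-1)))
      (⊥ : SimpleGraph (Fin n)) := by
  have hn : 2 ≤ n := le_trans hm hmn
  constructor
  · rintro (i | j)
    · rcases Nat.lt_or_ge (i.1+1) n with hi | hi
      · -- interior X vertex: use its window owner
        have hs : 1 ≤ sW n τ ∧ sW n τ ≤ n-1 ∧ sW n τ ≤ τ+1 := by unfold sW; omega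
        set w₀ := i.1 / sW n τ with hw₀
        have hd1 : w₀ * sW n τ ≤ i.1 := Nat.div_mul_le_self i.1 (sW n τ)
        have hd2 : sW n τ * w₀ + i.1 % sW n τ = i.1 := Nat.div_add_mod i.1 (sW n τ)
        have hd3 : i.1 % sW n τ < sW n τ := Nat.mod_lt _ (by omega)
        have hcomm : sW n τ * w₀ = w₀ * sW n τ := Nat.mul_comm _ _
        have hmul : (w₀+1) * sW n τ = w₀ * sW n τ + sW n τ := by ring
        have hcovs : n - 1 ≤ (a+b-1) * sW n τ := by
          have hsor : sW n τ = τ+1 ∨ sW n τ = n-1 := by unfold sW; omega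
          rcases hsor with h | h
          · rw [h]; exact hcov
          · rw [h]; exact Nat.le_mul_of_pos_left (n-1) (by omega)
        have hwlt : w₀ + 1 < a + b := by
          have : w₀ < a+b-1 := by
            rw [hw₀, Nat.div_lt_iff_lt_mul (by omega : 0 < sW n τ)]
            omega
          omega
        rcases Nat.lt_or_ge w₀ b with hwb | hwb
        · refine starB hm hn hmn haτ ⟨w₀, by omega⟩ (by simpa using hwb) _
            (Or.inr (Or.inl ⟨i, rfl, ?_, ?_⟩))
          · show cB n τ w₀ ≤ i.1
            unfold cB
            omega
          · show i.1 < cB n τ w₀ + sW n τ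
            unfold cB
            omega
        · refine starA hm hn ha hbτ ⟨w₀, by omega⟩ (by simpa using hwb)
            (by simpa using hwlt) ?_ _ (Or.inr ⟨i, rfl, ?_, ?_⟩)
          · show 1 ≤ wlen n τ w₀
            unfold wlen hiA
            omega
          · show w₀ * sW n τ ≤ i.1
            exact hd1
          · show i.1 < hiA n τ w₀
            unfold hiA
            omega
      · exact starApex hm hn ha hb hbτ _ (Or.inr (Or.inl ⟨i, rfl, by omega⟩))
    · rcases Nat.lt_or_ge j.1 b with hj | hj
      · exact starApex hm hn ha hb hbτ _ (Or.inr (Or.inr ⟨j, rfl, hj⟩))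
      · rcases Nat.lt_or_ge (j.1+1) (a+b) with hj2 | hj2
        · refine starB hm hn hmn haτ ⟨0, by omega⟩ (by show 0 < b; omega) _
            (Or.inr (Or.inr ⟨j, rfl, hj, by omega⟩))
        · exact starApex hm hn ha hb hbτ _ (Or.inl ⟨j, rfl, by omega⟩)
  · rintro (i | j)
    · exact indepX hn i
    · rcases Nat.lt_or_ge j.1 b with hj | hj
      · exact indepB hn ha j hj
      · rcases Nat.lt_or_ge (j.1+1) (a+b) with hj2 | hj2
        · exact indepA hn hbτ j hj hj2
        · exact indepTop hn ha j (by omega)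

end FullCon

lemma prod_mono (u v M : ℕ) (huv : u ≤ v) (hvM : u + v ≤ M) :
    u * (M - u) ≤ v * (M - v) := by
  have h1 : M - u = (M - v) + (v - u) := by omega
  have h2 : v = u + (v - u) := by omega
  rw [h1, Nat.mul_add]
  calc u * (M - v) + u * (v - u) ≤ u * (M - v) + (v - u) * (M - v) := by
        refine Nat.add_le_add_left ?_ _
        rw [Nat.mul_comm]
        exact Nat.mul_le_mul_left _ (by omega)
    _ = v * (M - v) := by rw [← Nat.add_mul]; congr 1; omega

lemma choose_params (n m : ℕ) (hm : 2 ≤ m) (hmn : m ≤ n) :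
    ∃ a b τ : ℕ, 1 ≤ a ∧ 1 ≤ b ∧ m-2 ≤ a+τ ∧ m-2 ≤ b+τ ∧
      n-1 ≤ (a+b-1) * (τ+1) ∧
      a+b+τ = sInf {x : ℕ | ∃ k : ℕ, 0 < k ∧
        x = max (k + (n - 1) ⌈/⌉ k) (2 * m - 3 - k)} := by
  have hn : 2 ≤ n := le_trans hm hmn
  set S := {x : ℕ | ∃ k : ℕ, 0 < k ∧ x = max (k + (n - 1) ⌈/⌉ k) (2 * m - 3 - k)} with hS
  have hne : S.Nonempty := ⟨max (1 + (n-1) ⌈/⌉ 1) (2*m-3-1), 1, one_pos, rfl⟩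
  obtain ⟨k, hk, hMk⟩ := Nat.sInf_mem hne
  set M := sInf S with hM
  set t := (n-1) ⌈/⌉ k with ht
  have h1 : k + t ≤ M := hMk ▸ le_max_left _ _
  have h2 : 2*m-3-k ≤ M := hMk ▸ le_max_right _ _
  have hceil : n-1 ≤ k * t := by
    have := le_smul_ceilDiv (b := n-1) hk
    simpa [smul_eq_mul] using this
  have htpos : 1 ≤ t := by
    rcases Nat.eq_zero_or_pos t with h | h
    · rw [h, Nat.mul_zero] at hceil; omega
    · exact h
  have hMm : m ≤ M := by
    by_cases ht1 : t ≤ 1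
    · have : n-1 ≤ k * 1 := (ceilDiv_le_iff_le_mul hk).1 ht1
      omega
    · omega
  set u := min k (M - k) with hu
  have hbase : n-1 ≤ u * (M - u) := by
    rcases Nat.le_total k (M-k) with h | h
    · have h3 : u = k := by omega
      rw [h3]
      calc n-1 ≤ k * t := hceil
        _ ≤ k * (M-k) := Nat.mul_le_mul_left _ (by omega)
    · have h3 : u = M-k := by omega
      have h4 : M - (M - k) = k := by omega
      rw [h3, h4, Nat.mul_comm]
      calc n-1 ≤ k * t := hceil
        _ ≤ k * (M-k) := Nat.mul_le_mul_left _ (by omega)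
  set c := max (2*m-3-M) u with hc
  have hcprod : n-1 ≤ c * (M - c) := by
    rcases Nat.le_total (2*m-3-M) u with h | h
    · have h3 : c = u := by omega
      rw [h3]; exact hbase
    · have h3 : c = 2*m-3-M := by omega
      calc n-1 ≤ u * (M-u) := hbase
        _ ≤ c * (M-c) := prod_mono u c M (by omega) (by omega)
  have hc1 : 1 ≤ c := by omega
  have hc2 : c + 1 ≤ M := by omega
  refine ⟨max 1 (m-2-(c-1)), M - (c-1) - max 1 (m-2-(c-1)), c-1,
    le_max_left _ _, by omega, by omega, by omega, ?_, by omega⟩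
  have he1 : max 1 (m-2-(c-1)) + (M - (c-1) - max 1 (m-2-(c-1))) - 1 = M - c := by omega
  have he2 : (c-1) + 1 = c := by omega
  rw [he1, he2, Nat.mul_comm]
  exact hcprod

lemma isFullPair_of_iso {α β γ δ : Type*} {G : SimpleGraph α} {G' : SimpleGraph β}
    (ψ : G ≃g G') {H₁ : SimpleGraph γ} {H₂ : SimpleGraph δ}
    (h : IsFullPair G H₁ H₂) : IsFullPair G' H₁ H₂ := by
  obtain ⟨h1, h2⟩ := h
  constructor
  · intro v
    obtain ⟨φ, x, hx⟩ := h1 (ψ.symm v)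
    exact ⟨ψ.toEmbedding.comp φ, x, by simp [hx]⟩
  · intro v
    obtain ⟨φ, x, hx⟩ := h2 (ψ.symm v)
    exact ⟨ψ.toEmbedding.comp φ, x, by simp [hx]⟩

/-- **Lemma 4.2.** For `n ≥ m ≥ 2`,
`f(S_m, K̄_n) ≤ n + min_k max{k + ⌈(n−1)/k⌉, 2m − 3 − k}`,
the minimum being over positive integers `k`. -/
theorem fullNum2_star_empty_upper (m n : ℕ) (hm : 2 ≤ m) (hmn : m ≤ n) :
    fullNum2 (completeBipartiteGraph (Fin 1) (Fin (m - 1))) (⊥ : SimpleGraph (Fin n)) ≤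
      n + sInf {x : ℕ | ∃ k : ℕ, 0 < k ∧
        x = max (k + (n - 1) ⌈/⌉ k) (2 * m - 3 - k)} := by
  obtain ⟨a, b, τ, ha, hb, haτ, hbτ, hcov, heq⟩ := choose_params n m hm hmn
  rw [← heq]
  have hfull := FullCon.isFullPair_GG (n := n) (m := m) hm hmn ha hb haτ hbτ hcov
  have e : (Fin n ⊕ Fin (a+b+τ)) ≃ Fin (n + (a+b+τ)) := finSumFinEquiv
  set G' : SimpleGraph (Fin (n + (a+b+τ))) :=
    SimpleGraph.comap (⇑e.symm) (FullCon.GG n m a b τ) with hG'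
  have ψ : (FullCon.GG n m a b τ) ≃g G' := by
    refine ⟨e, ?_⟩
    intro x y
    simp [hG', SimpleGraph.comap]
  exact Nat.sInf_le ⟨G', isFullPair_of_iso ψ hfull⟩
end

section
/- For any finite simple graphs H₁, …, H_k, each with at least one vertex, f(H₁, …, H_k) ≤ ∏_{i=1}^{k} n(H_i); indeed, the Cartesian (box) product H₁ □ ⋯ □ H_k is (H₁,…,H_k)-full. -/
open SimpleGraph Finset

/-- `G` is `(H 0, …, H (k-1))`-full: for each `i`, the induced copies of `H i` cover `V(G)`. -/
def IsFullFamily {k : ℕ} {α : Type*} (G : SimpleGraph α)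
    {W : Fin k → Type*} (H : ∀ i, SimpleGraph (W i)) : Prop :=
  ∀ i, CoveredByCopies G (H i)

/-- `f(H 0, …, H (k-1))`: the minimum order of an `(H 0, …, H (k-1))`-full graph. -/
noncomputable def fullNum {k : ℕ} {W : Fin k → Type*} (H : ∀ i, SimpleGraph (W i)) : ℕ :=
  sInf {N : ℕ | ∃ G : SimpleGraph (Fin N), IsFullFamily G H}

/-- The Cartesian (box) product of a family of graphs: `x` and `y` are adjacent iff
they differ in exactly one coordinate `i`, where they are adjacent in `H i`. -/
def boxProdFamily {k : ℕ} {W : Fin k → Type*} (H : ∀ i, SimpleGraph (W i)) :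
    SimpleGraph (∀ i, W i) where
  Adj x y := ∃ i, (H i).Adj (x i) (y i) ∧ ∀ j, j ≠ i → x j = y j
  symm := by
    constructor
    rintro x y ⟨i, hadj, heq⟩
    exact ⟨i, (H i).symm.symm _ _ hadj, fun j hj => (heq j hj).symm⟩
  loopless := by
    constructor
    rintro x ⟨i, hadj, -⟩
    exact (H i).irrefl hadj

/-- The canonical embedding of `H i` into the box product, fixing base point `v`. -/
def boxEmb {k : ℕ} {W : Fin k → Type*} [∀ i, DecidableEq (W i)]
    (H : ∀ i, SimpleGraph (W i)) (i : Fin k) (v : ∀ j, W j) :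
    H i ↪g boxProdFamily H where
  toFun w := Function.update v i w
  inj' := by
    exact Function.update_injective v i
  map_rel_iff' := by
    intro w w'
    constructor
    · rintro ⟨j, hadj, heq⟩
      rcases eq_or_ne j i with rfl | hji
      · simpa using hadj
      · exfalso
        simp only [RelEmbedding.coe_mk, Function.Embedding.coeFn_mk,
          Function.update_of_ne hji] at hadj
        exact (H j).irrefl hadj
    · intro h
      exact ⟨i, by simpa using h, fun j hj => by
        simp [Function.update_of_ne hj]⟩

theorem boxFull {k : ℕ} {W : Fin k → Type*} (H : ∀ i, SimpleGraph (W i)) :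
    IsFullFamily (boxProdFamily H) H := by
  classical
  intro i v
  exact ⟨boxEmb H i v, v i, by simp [boxEmb]⟩

/-- `f(H₁, …, H_k) ≤ ∏ n(H_i)`; indeed the Cartesian (box) product
`H₁ □ ⋯ □ H_k` is `(H₁, …, H_k)`-full. -/
theorem fullNum_le_prod {k : ℕ} {W : Fin k → Type*} [∀ i, Fintype (W i)]
    (H : ∀ i, SimpleGraph (W i)) (hne : ∀ i, Nonempty (W i)) :
    fullNum H ≤ ∏ i, Fintype.card (W i) ∧ IsFullFamily (boxProdFamily H) H := by
  classical
  refine ⟨?_, boxFull H⟩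
  have e : (∀ i, W i) ≃ Fin (∏ i, Fintype.card (W i)) := by
    refine (Fintype.equivFin _).trans (finCongr ?_)
    simp [Fintype.card_pi]
  refine Nat.sInf_le ⟨(boxProdFamily H).comap e.symm, ?_⟩
  intro i v
  obtain ⟨φ, w, hw⟩ := boxFull H i (e.symm v)
  refine ⟨φ.trans (SimpleGraph.Iso.comap e.symm (boxProdFamily H)).symm.toEmbedding, w, ?_⟩
  simp only [RelEmbedding.coe_trans, Function.comp_apply, hw]
  rw [show ((SimpleGraph.Iso.comap e.symm (boxProdFamily H)).symm.toEmbedding : _ → _) = ⇑e.symm.symm from rfl]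
  exact Equiv.symm_apply_apply e.symm v
end
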